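/- Let $a_1,\ldots,a_k$ be distinct elements of a field $F$, and write $\prod_{i=1}^{k}(x - a_i) = \sum_{j=0}^{k} c_j x^{k-j}$ (so $c_0 = 1$). Fix $t \geq 0$ and define $e_0 = 1$, $e_i = -\sum_{j=0}^{i-1} e_j c_{i-j}$ for $1 \leq i \leq t$ (with $c_m = 0$ for $m > k$). Define $f_{t,s} = -\sum_{i=0}^{\min\{t,s\}} c_{i+k-s} e_{t-i}$ for $0 \leq s \leq k-1$. Then for every $1 \leq r \leq k$, $a_r^{k+t} = \sum_{s=0}^{k-1} f_{t,s} a_r^{s}$. -/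

import Mathlib

open Polynomial in
/-- Lemma 4: with `∏_{i=1}^k (x - a_i) = ∑_{j=0}^k c_j x^{k-j}`, `e` the inverse
recurrence sequence and `f_{t,s} = -∑_{i=0}^{min(t,s)} c_{i+k-s} e_{t-i}`, one has
`a_r^{k+t} = ∑_{s=0}^{k-1} f_{t,s} a_r^s` for each `r`. -/
theorem stmt_2 {F : Type*} [Field F] (k t : ℕ) (a : Fin k → F)
    (ha : Function.Injective a) (c e f : ℕ → F)
    (hc : (∏ i : Fin k, (X - C (a i))) =
      ∑ j ∈ Finset.range (k + 1), Polynomial.C (c j) * X ^ (k - j))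
    (hc' : ∀ m, k < m → c m = 0)
    (he0 : e 0 = 1)
    (he : ∀ i, 1 ≤ i → i ≤ t → e i = -∑ j ∈ Finset.range i, e j * c (i - j))
    (hf : ∀ s, s ≤ k - 1 → f s = -∑ i ∈ Finset.range (min t s + 1), c (i + k - s) * e (t - i)) :
    ∀ r : Fin k, a r ^ (k + t) = ∑ s ∈ Finset.range k, f s * a r ^ s := by
  intro r
  have hk : 0 < k := r.pos
  set v := a r with hv
  -- c 0 = 1
  have hc0 : c 0 = 1 := by
    have h := congrArg (fun p => Polynomial.coeff p k) hc
    rw [Polynomial.finset_sum_coeff] at h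
    have hL : (∏ i : Fin k, (X - C (a i))).coeff k = 1 := by
      have hm : (∏ i : Fin k, (X - C (a i))).Monic :=
        monic_prod_of_monic _ _ fun i _ => monic_X_sub_C (a i)
      have hd : (∏ i : Fin k, (X - C (a i))).natDegree = k := by
        rw [Polynomial.natDegree_prod]
        · simp
        · intro i _; exact X_sub_C_ne_zero (a i)
      have h2 := hm.coeff_natDegree
      rwa [hd] at h2
    rw [hL, Finset.sum_eq_single 0] at h
    · simpa using h.symm
    · intro j hj hj0
      rw [Polynomial.coeff_C_mul, Polynomial.coeff_X_pow]
      simp only [Finset.mem_range] at hj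
      have : ¬ (k = k - j) := by omega
      simp [this]
    · intro h0; simp at h0
  -- evaluate at v
  have hPv : ∑ j ∈ Finset.range (k + 1), c j * v ^ (k - j) = 0 := by
    have h := congrArg (Polynomial.eval v) hc
    rw [Polynomial.eval_prod, Polynomial.eval_finset_sum] at h
    simp only [Polynomial.eval_mul, Polynomial.eval_C, Polynomial.eval_pow,
      Polynomial.eval_X, Polynomial.eval_sub] at h
    rw [← h]
    exact Finset.prod_eq_zero (Finset.mem_univ r) (sub_eq_zero.mpr hv)
  have hbase : v ^ k = -∑ s ∈ Finset.range k, c (k - s) * v ^ s := by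
    have h1 : ∑ j ∈ Finset.range (k + 1), c (k - j) * v ^ j = 0 := by
      rw [← hPv, ← Finset.sum_range_reflect]
      apply Finset.sum_congr rfl
      intro j hj
      simp only [Finset.mem_range] at hj
      have h2 : k + 1 - 1 - j = k - j := by omega
      have h3 : k - (k - j) = j := by omega
      rw [h2, h3]
    rw [Finset.sum_range_succ] at h1
    simp only [Nat.sub_self, hc0, one_mul] at h1
    linear_combination h1
  obtain ⟨k', rfl⟩ : ∃ k', k = k' + 1 := ⟨k - 1, by omega⟩
  -- main induction
  have key : ∀ u, u ≤ t → v ^ (k' + 1 + u) =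
      ∑ s ∈ Finset.range (k' + 1),
        (-∑ i ∈ Finset.range (min u s + 1), c (i + (k' + 1) - s) * e (u - i)) * v ^ s := by
    intro u
    induction u with
    | zero =>
      intro _
      rw [add_zero, hbase]
      rw [← Finset.sum_neg_distrib]
      apply Finset.sum_congr rfl
      intro s hs
      simp [he0]
    | succ u ih =>
      intro hut
      have ihu := ih (by omega)
      -- F_u(k') = e (u+1)
      have hL1 : e (u + 1) =
          -∑ i ∈ Finset.range (min u k' + 1), c (i + (k' + 1) - k') * e (u - i) := by
        rw [he (u + 1) (by omega) hut]
        congr 1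
        calc ∑ j ∈ Finset.range (u + 1), e j * c (u + 1 - j)
            = ∑ i ∈ Finset.range (u + 1), e (u - i) * c (i + 1) := by
              rw [← Finset.sum_range_reflect]
              apply Finset.sum_congr rfl
              intro j hj
              simp only [Finset.mem_range] at hj
              rw [show u + 1 - 1 - j = u - j from by omega]
              rw [show u + 1 - (u - j) = j + 1 from by omega]
          _ = ∑ i ∈ Finset.range (min u k' + 1), e (u - i) * c (i + 1) := by
              refine (Finset.sum_subset (Finset.range_subset_range.mpr (by omega)) ?_).symm
              intro i hi hni
              simp only [Finset.mem_range] at hi hni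
              rw [hc' (i + 1) (by omega), mul_zero]
          _ = ∑ i ∈ Finset.range (min u k' + 1), c (i + (k' + 1) - k') * e (u - i) := by
              apply Finset.sum_congr rfl
              intro i hi
              have h6 : i + (k' + 1) - k' = i + 1 := by omega
              rw [h6, mul_comm]
      have hstep0 : (-∑ i ∈ Finset.range (min (u + 1) 0 + 1),
          c (i + (k' + 1) - 0) * e (u + 1 - i)) = -(e (u + 1) * c (k' + 1)) := by
        simp [mul_comm]
      have hstep : ∀ s, s < k' →
          (-∑ i ∈ Finset.range (min (u + 1) (s + 1) + 1),
            c (i + (k' + 1) - (s + 1)) * e (u + 1 - i))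
          = (-∑ i ∈ Finset.range (min u s + 1), c (i + (k' + 1) - s) * e (u - i))
            - e (u + 1) * c (k' - s) := by
        intro s hs
        have hmin : min (u + 1) (s + 1) = min u s + 1 := by omega
        rw [hmin, Finset.sum_range_succ', sub_eq_add_neg, neg_add]
        congr 1
        · congr 1
          apply Finset.sum_congr rfl
          intro i hi
          have h1 : i + 1 + (k' + 1) - (s + 1) = i + (k' + 1) - s := by omega
          have h2 : u + 1 - (i + 1) = u - i := by omega
          rw [h1, h2]
        · have h3 : 0 + (k' + 1) - (s + 1) = k' - s := by omega
          rw [h3]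
          simp only [Nat.sub_zero]
          ring
      have hbase' : v ^ (k' + 1) =
          -(∑ s ∈ Finset.range k', c (k' - s) * v ^ (s + 1) + c (k' + 1) * v ^ 0) := by
        have e1 : ∑ s ∈ Finset.range k', c (k' + 1 - (s + 1)) * v ^ (s + 1)
            = ∑ s ∈ Finset.range k', c (k' - s) * v ^ (s + 1) :=
          Finset.sum_congr rfl fun s hs => by
            rw [show k' + 1 - (s + 1) = k' - s from by omega]
        rw [hbase, Finset.sum_range_succ', e1]
        norm_num
      rw [Finset.sum_range_succ' (fun s =>
        (-∑ i ∈ Finset.range (min (u + 1) s + 1), c (i + (k' + 1) - s) * e (u + 1 - i)) * v ^ s)]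
      rw [hstep0]
      have hrw : ∑ s ∈ Finset.range k',
          (-∑ i ∈ Finset.range (min (u + 1) (s + 1) + 1),
            c (i + (k' + 1) - (s + 1)) * e (u + 1 - i)) * v ^ (s + 1)
          = (∑ s ∈ Finset.range k',
              (-∑ i ∈ Finset.range (min u s + 1), c (i + (k' + 1) - s) * e (u - i)) * v ^ (s + 1))
            - e (u + 1) * ∑ s ∈ Finset.range k', c (k' - s) * v ^ (s + 1) := by
        rw [Finset.mul_sum, ← Finset.sum_sub_distrib]
        apply Finset.sum_congr rfl
        intro s hs
        simp only [Finset.mem_range] at hs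
        rw [hstep s hs]
        ring
      rw [hrw]
      have hLHS : v ^ (k' + 1 + (u + 1)) = v ^ (k' + 1 + u) * v := pow_succ v (k' + 1 + u)
      rw [hLHS, ihu, Finset.sum_mul, Finset.sum_range_succ]
      have hterm : ∑ s ∈ Finset.range k',
          (-∑ i ∈ Finset.range (min u s + 1), c (i + (k' + 1) - s) * e (u - i)) * v ^ s * v
          = ∑ s ∈ Finset.range k',
          (-∑ i ∈ Finset.range (min u s + 1), c (i + (k' + 1) - s) * e (u - i)) * v ^ (s + 1) := by
        apply Finset.sum_congr rfl
        intro s hs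
        rw [mul_assoc, ← pow_succ]
      rw [hterm, ← hL1, mul_assoc, ← pow_succ, hbase']
      ring
  have hkey := key t le_rfl
  rw [hkey]
  apply Finset.sum_congr rfl
  intro s hs
  simp only [Finset.mem_range] at hs
  rw [hf s (by omega)]
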